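/- Let 𝒞 ⊆ ℝ^{n+m} be a proper C-set and let A ∈ ℝ^{n×n}, B ∈ ℝ^{n×m}. Let ℒ ⊆ ℝⁿ be a proper C-set verifying the control Lyapunov decrease condition (for every x ∈ ℝⁿ there exists u ∈ ℝᵐ with γ(ℒ, Ax+Bu) + γ(𝒞, (x,u)) ≤ γ(ℒ, x)), and let 𝒟⁺ = P_x𝒞. Let S ⊆ ℝⁿ be a C-set with S ⊆ ℒ*, and let (𝒫_k)_{k≥1} be the iterates 𝒫₁ = P_x(𝒞* ⊕ MᵀS)*, 𝒫_{k+1} = P_x(𝒞* ⊕ Mᵀ𝒫_k*)* for k ≥ 1. Then for every k ≥ 1, ℒ ⊆ 𝒫_k ⊆ 𝒟⁺. -/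

import Mathlib

open Pointwise Filter Topology Matrix

set_option maxHeartbeats 1000000
set_option synthInstance.maxHeartbeats 400000

noncomputable section

/-- ℝⁿ with the standard (Euclidean) inner product. -/
abbrev Rsp (n : ℕ) := EuclideanSpace ℝ (Fin n)

/-- ℝ^{n+m} realized as the L²-product ℝⁿ × ℝᵐ. -/
abbrev Rsp2 (n m : ℕ) := WithLp 2 (Rsp n × Rsp m)

/-- A C-set: compact, convex, containing the origin. -/
def IsCSet {E : Type*} [NormedAddCommGroup E] [NormedSpace ℝ E] (X : Set E) : Prop :=
  IsCompact X ∧ Convex ℝ X ∧ (0 : E) ∈ X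

/-- A proper C-set: a C-set containing the origin in its interior. -/
def IsProperCSet {E : Type*} [NormedAddCommGroup E] [NormedSpace ℝ E] (X : Set E) : Prop :=
  IsCSet X ∧ (0 : E) ∈ interior X

/-- The polar set 𝒳* = {y : ⟨y,x⟩ ≤ 1 for all x ∈ 𝒳}. -/
def polarSet {E : Type*} [NormedAddCommGroup E] [InnerProductSpace ℝ E] (X : Set E) : Set E :=
  {y | ∀ x ∈ X, inner ℝ y x ≤ (1 : ℝ)}

/-- The Minkowski (gauge) function γ(𝒳,y) = inf{η ≥ 0 : y ∈ η𝒳}. -/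
def mgauge {E : Type*} [NormedAddCommGroup E] [NormedSpace ℝ E] (X : Set E) (y : E) : ℝ :=
  sInf {η : ℝ | 0 ≤ η ∧ y ∈ η • X}

variable {n m : ℕ}

/-- The map M = (A B) : ℝ^{n+m} → ℝⁿ, M(x,u) = Ax + Bu. -/
def Mfwd (A : Matrix (Fin n) (Fin n) ℝ) (B : Matrix (Fin n) (Fin m) ℝ) (w : Rsp2 n m) : Rsp n :=
  Matrix.toEuclideanLin A w.ofLp.1 + Matrix.toEuclideanLin B w.ofLp.2

/-- The transpose map Mᵀ : ℝⁿ → ℝ^{n+m}, Mᵀp = (Aᵀp, Bᵀp). -/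
def Mtr (A : Matrix (Fin n) (Fin n) ℝ) (B : Matrix (Fin n) (Fin m) ℝ) (p : Rsp n) : Rsp2 n m :=
  WithLp.toLp 2 (Matrix.toEuclideanLin Aᵀ p, Matrix.toEuclideanLin Bᵀ p)

/-- The projection P_x : ℝ^{n+m} → ℝⁿ, (x,u) ↦ x. -/
def Pxproj : Rsp2 n m → Rsp n := fun w => w.ofLp.1

/- ### Auxiliary lemmas -/

section Aux

variable {E : Type*} [NormedAddCommGroup E] [InnerProductSpace ℝ E]

lemma zero_mem_polarSet (X : Set E) : (0 : E) ∈ polarSet X := by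
  intro x hx
  simp [inner_zero_left]

lemma polarSet_anti {X Y : Set E} (h : X ⊆ Y) : polarSet Y ⊆ polarSet X :=
  fun p hp x hx => hp x (h hx)

lemma mgauge_le_one {X : Set E} {x : E} (hx : x ∈ X) : mgauge X x ≤ 1 := by
  apply csInf_le ⟨0, fun r hr => hr.1⟩
  exact ⟨zero_le_one, by rw [one_smul]; exact hx⟩

lemma inner_le_mgauge {X : Set E} (hX : (0 : E) ∈ interior X) {c : E}
    (hc : c ∈ polarSet X) (w : E) : (inner ℝ c w : ℝ) ≤ mgauge X w := by
  have habs : Absorbent ℝ X := absorbent_nhds_zero (mem_interior_iff_mem_nhds.mp hX)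
  have hne : {η : ℝ | 0 ≤ η ∧ w ∈ η • X}.Nonempty := by
    obtain ⟨r, hr, hrw⟩ := habs.gauge_set_nonempty (x := w)
    exact ⟨r, hr.le, hrw⟩
  refine le_csInf hne ?_
  rintro η ⟨hη, hw⟩
  obtain ⟨a, ha, rfl⟩ := hw
  rw [real_inner_smul_right]
  calc η * inner ℝ c a ≤ η * 1 := mul_le_mul_of_nonneg_left (hc a ha) hη
    _ = η := mul_one η

lemma bipolar_subset [CompleteSpace E] {C : Set E} (hconv : Convex ℝ C)
    (hcl : IsClosed C) (h0 : (0 : E) ∈ C) : polarSet (polarSet C) ⊆ C := by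
  intro w hw
  by_contra hwC
  obtain ⟨f, u, hfs, hfw⟩ := geometric_hahn_banach_closed_point hconv hcl hwC
  have hu : (0 : ℝ) < u := by simpa using hfs 0 h0
  set y := (InnerProductSpace.toDual ℝ E).symm f with hy
  have hyz : ∀ z : E, (inner ℝ y z : ℝ) = f z := fun z => InnerProductSpace.toDual_symm_apply
  have hmem : u⁻¹ • y ∈ polarSet C := by
    intro x hx
    rw [real_inner_smul_left, hyz]
    rw [inv_mul_le_iff₀ hu, mul_one]
    exact (hfs x hx).le
  have h1 := hw _ hmem
  rw [real_inner_smul_right, real_inner_comm, hyz] at h1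
  rw [inv_mul_le_iff₀ hu, mul_one] at h1
  linarith

end Aux

lemma inner_toEuclideanLin_transpose {k n : ℕ} (A : Matrix (Fin n) (Fin k) ℝ)
    (x : EuclideanSpace ℝ (Fin k)) (p : EuclideanSpace ℝ (Fin n)) :
    (inner ℝ x (Matrix.toEuclideanLin Aᵀ p) : ℝ)
      = inner ℝ (Matrix.toEuclideanLin A x) p := by
  simp only [PiLp.inner_apply, RCLike.inner_apply, starRingEnd_apply, star_trivial,
    Matrix.toEuclideanLin_apply]
  simp only [PiLp.toLp_apply, Matrix.mulVec,
    dotProduct, Matrix.transpose_apply, Finset.mul_sum, Finset.sum_mul]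
  rw [Finset.sum_comm]
  apply Finset.sum_congr rfl
  intro i _
  apply Finset.sum_congr rfl
  intro j _
  ring

lemma Mtr_zero (A : Matrix (Fin n) (Fin n) ℝ) (B : Matrix (Fin n) (Fin m) ℝ) :
    Mtr A B (0 : Rsp n) = 0 := by
  simp [Mtr]

lemma inner_Mtr (A : Matrix (Fin n) (Fin n) ℝ) (B : Matrix (Fin n) (Fin m) ℝ)
    (w : Rsp2 n m) (p : Rsp n) :
    (inner ℝ w (Mtr A B p) : ℝ) = inner ℝ (Mfwd A B w) p := by
  rw [WithLp.prod_inner_apply]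
  show (inner ℝ w.ofLp.1 (Matrix.toEuclideanLin Aᵀ p) : ℝ) + inner ℝ w.ofLp.2 (Matrix.toEuclideanLin Bᵀ p)
      = inner ℝ (Mfwd A B w) p
  rw [inner_toEuclideanLin_transpose, inner_toEuclideanLin_transpose, Mfwd, inner_add_left]

/-- The one-step inclusion lemma. -/
lemma step_lemma {n m : ℕ} {C : Set (Rsp2 n m)} (hC : IsProperCSet C)
    {A : Matrix (Fin n) (Fin n) ℝ} {B : Matrix (Fin n) (Fin m) ℝ}
    {L : Set (Rsp n)} (hL : IsProperCSet L)
    (hLyap : ∀ x : Rsp n, ∃ u : Rsp m,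
      mgauge L (Mfwd A B (WithLp.toLp 2 (x, u))) + mgauge C (WithLp.toLp 2 (x, u) : Rsp2 n m) ≤ mgauge L x)
    {T : Set (Rsp n)} (hT0 : (0 : Rsp n) ∈ T) (hTL : T ⊆ polarSet L) :
    L ⊆ Pxproj '' polarSet (polarSet C + Mtr A B '' T) ∧
    Pxproj '' polarSet (polarSet C + Mtr A B '' T) ⊆ Pxproj '' C := by
  constructor
  · intro x hx
    obtain ⟨u, hu⟩ := hLyap x
    refine ⟨(WithLp.toLp 2 (x, u) : Rsp2 n m), ?_, rfl⟩
    intro z hz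
    rw [Set.mem_add] at hz
    obtain ⟨c, hc, y, hy, rfl⟩ := hz
    obtain ⟨s, hs, rfl⟩ := hy
    have h1 : @inner ℝ (Rsp2 n m) _ (WithLp.toLp 2 (x, u) : Rsp2 n m) c ≤ mgauge C (WithLp.toLp 2 (x, u) : Rsp2 n m) := by
      rw [real_inner_comm]; exact inner_le_mgauge hC.2 hc _
    have h2 : @inner ℝ (Rsp2 n m) _ (WithLp.toLp 2 (x, u) : Rsp2 n m) (Mtr A B s)
        = @inner ℝ (Rsp n) _ (Mfwd A B (WithLp.toLp 2 (x, u) : Rsp2 n m)) s := inner_Mtr A B _ s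
    have h3 : @inner ℝ (Rsp n) _ (Mfwd A B (WithLp.toLp 2 (x, u) : Rsp2 n m)) s
        ≤ mgauge L (Mfwd A B (WithLp.toLp 2 (x, u) : Rsp2 n m)) := by
      rw [real_inner_comm]; exact inner_le_mgauge hL.2 (hTL hs) _
    have h4 : mgauge L x ≤ 1 := mgauge_le_one hx
    rw [inner_add_right, h2]
    linarith
  · have hsub : polarSet C ⊆ polarSet C + Mtr A B '' T := by
      intro c hc
      have h0 : (0 : Rsp2 n m) ∈ Mtr A B '' T := ⟨0, hT0, Mtr_zero A B⟩
      simpa using Set.add_mem_add hc h0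
    refine Set.image_mono ?_
    intro w hw
    apply bipolar_subset hC.1.2.1 hC.1.1.isClosed hC.1.2.2
    intro p hp
    exact hw p (hsub hp)

/-- the iterates are inner bounded by ℒ and outer bounded by 𝒟⁺ = P_x𝒞. -/
theorem stmt_13 (n m : ℕ) (C : Set (Rsp2 n m)) (hC : IsProperCSet C)
    (A : Matrix (Fin n) (Fin n) ℝ) (B : Matrix (Fin n) (Fin m) ℝ)
    (L : Set (Rsp n)) (hL : IsProperCSet L)
    (hLyap : ∀ x : Rsp n, ∃ u : Rsp m,
      mgauge L (Mfwd A B (WithLp.toLp 2 (x, u))) + mgauge C (WithLp.toLp 2 (x, u) : Rsp2 n m) ≤ mgauge L x)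
    (Dplus : Set (Rsp n)) (hD : Dplus = Pxproj '' C)
    (S : Set (Rsp n)) (hS : IsCSet S) (hSL : S ⊆ polarSet L)
    (P : ℕ → Set (Rsp n))
    (hP0 : P 0 = Pxproj '' polarSet (polarSet C + Mtr A B '' S))
    (hPs : ∀ k : ℕ, P (k + 1) = Pxproj '' polarSet (polarSet C + Mtr A B '' polarSet (P k))) :
    ∀ k : ℕ, L ⊆ P k ∧ P k ⊆ Dplus := by
  intro k
  induction k with
  | zero =>
    rw [hP0, hD]
    exact step_lemma hC hL hLyap hS.2.2 hSL
  | succ k ih =>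
    rw [hPs k, hD]
    exact step_lemma hC hL hLyap (zero_mem_polarSet (P k)) (polarSet_anti ih.1)
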